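/- Let μ be a σ-finite measure on (X,A) and N the Poisson point process with intensity μ. For simple functions f, g ∈ L²(μ) (finite linear combinations of indicators of finite-measure sets, with values > −1), the exponential vectors satisfy ⟨𝓔_f, 𝓔_g⟩_{L²(μ*)} = exp(⟨f, g⟩_{L²(μ)}), where 𝓔_f(ν) = exp(−∫ f dμ) · Π_{x : ν({x})=1} (1 + f(x)). -/

import Mathlib

open MeasureTheory ProbabilityTheory Real
open scoped NNReal ENNReal Nat

lemma poisson_pow_integral (r : ℝ≥0) {c : ℝ} (hc : 0 ≤ c) :
    ∫ n, c ^ n ∂(poissonMeasure r) = exp (r * (c - 1)) := by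
  have hmeas : Measurable fun n : ℕ => c ^ n := measurable_from_top
  rw [integral_eq_lintegral_of_nonneg_ae (ae_of_all _ fun n => pow_nonneg hc n)
    hmeas.aestronglyMeasurable, lintegral_countable']
  have hsing : ∀ n : ℕ, poissonMeasure r {n} = ENNReal.ofReal (poissonPMFReal r n) := by
    intro n
    rw [poissonMeasure_singleton]
    rfl
  have hterm : ∀ n : ℕ, ENNReal.ofReal (c ^ n) * poissonMeasure r {n}
      = ENNReal.ofReal (exp (-r) * ((r * c) ^ n / n !)) := by
    intro n
    rw [hsing n, ← ENNReal.ofReal_mul (pow_nonneg hc n)]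
    congr 1
    unfold poissonPMFReal
    rw [mul_pow]
    ring
  simp_rw [hterm]
  have hsumm : Summable fun n : ℕ => exp (-r) * ((r * c) ^ n / n !) :=
    (Real.summable_pow_div_factorial (r * c)).mul_left _
  rw [← ENNReal.ofReal_tsum_of_nonneg
    (fun n => mul_nonneg (exp_nonneg _) (div_nonneg (pow_nonneg (by positivity) n) (by positivity)))
    hsumm]
  rw [tsum_mul_left]
  have hexp : (∑' n : ℕ, (r * c) ^ n / n !) = exp (r * c) := by
    rw [Real.exp_eq_exp_ℝ, NormedSpace.exp_eq_tsum_div]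
  rw [hexp, ← Real.exp_add, ENNReal.toReal_ofReal (exp_nonneg _)]
  congr 1
  ring

lemma poisson_prod_integral {Ω : Type*} [MeasurableSpace Ω] (P : Measure Ω)
    [IsProbabilityMeasure P] {m : ℕ}
    (c : Fin m → ℝ) (hc : ∀ i, 0 ≤ c i) (N : Fin m → Ω → ℕ) (hNmeas : ∀ i, Measurable (N i))
    (r : Fin m → ℝ≥0) (hNlaw : ∀ i, Measure.map (N i) P = poissonMeasure (r i))
    (hNindep : iIndepFun N P) (s : Finset (Fin m)) :
    ∫ ω, ∏ i ∈ s, c i ^ N i ω ∂P = ∏ i ∈ s, exp ((r i : ℝ) * (c i - 1)) := by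
  classical
  have hone : ∀ i, ∫ ω, c i ^ N i ω ∂P = exp ((r i : ℝ) * (c i - 1)) := by
    intro i
    have hm : Measurable fun n : ℕ => c i ^ n := measurable_from_top
    rw [← poisson_pow_integral (r i) (hc i), ← hNlaw i,
      integral_map (hNmeas i).aemeasurable hm.aestronglyMeasurable]
  have hfun : iIndepFun
      (fun i ω => c i ^ N i ω) P :=
    hNindep.comp (fun i n => c i ^ n) (fun i => measurable_from_top)
  induction s using Finset.induction_on with
  | empty => simp
  | insert j s hi ih =>
    rw [Finset.prod_insert hi, ← ih]
    have hfm : ∀ i, Measurable fun ω => c i ^ N i ω :=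
      fun i => (measurable_from_top (f := fun n : ℕ => c i ^ n)).comp (hNmeas i)
    have hind : IndepFun (fun ω => c j ^ N j ω) (fun ω => ∏ i ∈ s, c i ^ N i ω) P := by
      have := (hfun.indepFun_finset_prod_of_notMem hfm hi).symm
      convert this using 1
      ext ω
      simp
    have := hind.integral_fun_mul_eq_mul_integral
      (hfm j).aestronglyMeasurable
      (Finset.aemeasurable_fun_prod _ fun i _ => (hfm i).aemeasurable).aestronglyMeasurable
    calc ∫ ω, ∏ i ∈ insert j s, c i ^ N i ω ∂P
        = ∫ ω, (c j ^ N j ω) * ∏ i ∈ s, c i ^ N i ω ∂P := by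
          congr 1; ext ω; rw [Finset.prod_insert hi]
      _ = (∫ ω, c j ^ N j ω ∂P) * ∫ ω, ∏ i ∈ s, c i ^ N i ω ∂P := this
      _ = exp ((r j : ℝ) * (c j - 1)) * ∫ ω, ∏ i ∈ s, c i ^ N i ω ∂P := by rw [hone j]

/-- inner product of exponential vectors over a Poisson point process.
For simple functions `f = Σᵢ aᵢ 1_{Aᵢ}` and `g = Σᵢ bᵢ 1_{Aᵢ}` (with `Aᵢ` pairwise
disjoint of finite measure and values `> −1`), the exponential vectors
`𝓔_f(ν) = exp(−∫ f dμ) Π_{x ∈ ν} (1 + f(x))`, here evaluated via the Poisson counts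
`N_{Aᵢ}` as `𝓔_f = exp(−Σᵢ aᵢ μ(Aᵢ)) Πᵢ (1+aᵢ)^{N_{Aᵢ}}`, satisfy
`⟨𝓔_f, 𝓔_g⟩_{L²(μ*)} = exp(⟨f, g⟩_{L²(μ)}) = exp(Σᵢ aᵢ bᵢ μ(Aᵢ))`. -/
theorem stmt10 {X Ω : Type*} [MeasurableSpace X] [MeasurableSpace Ω]
    (μ : Measure X) [SigmaFinite μ] (P : Measure Ω) [IsProbabilityMeasure P]
    (m : ℕ) (A : Fin m → Set X)
    (hAmeas : ∀ i, MeasurableSet (A i)) (hAfin : ∀ i, μ (A i) < ⊤)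
    (hAdisj : Pairwise (Function.onFun Disjoint A))
    (a b : Fin m → ℝ) (ha : ∀ i, -1 < a i) (hb : ∀ i, -1 < b i)
    (N : Fin m → Ω → ℕ) (hNmeas : ∀ i, Measurable (N i))
    (hNlaw : ∀ i, Measure.map (N i) P = poissonMeasure (μ (A i)).toNNReal)
    (hNindep : iIndepFun N P) :
    ∫ ω, (exp (-∑ i, a i * (μ (A i)).toReal) * ∏ i, (1 + a i) ^ N i ω)
        * (exp (-∑ i, b i * (μ (A i)).toReal) * ∏ i, (1 + b i) ^ N i ω) ∂P
      = exp (∑ i, a i * b i * (μ (A i)).toReal) := by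
  classical
  set c : Fin m → ℝ := fun i => (1 + a i) * (1 + b i) with hcdef
  have hc : ∀ i, 0 ≤ c i := fun i =>
    mul_nonneg (by linarith [ha i]) (by linarith [hb i])
  have key := poisson_prod_integral P c hc N hNmeas (fun i => (μ (A i)).toNNReal)
    hNlaw hNindep Finset.univ
  have hlam : ∀ i, (((μ (A i)).toNNReal : ℝ)) = (μ (A i)).toReal := fun i => rfl
  have hint : ∀ ω, (exp (-∑ i, a i * (μ (A i)).toReal) * ∏ i, (1 + a i) ^ N i ω)
        * (exp (-∑ i, b i * (μ (A i)).toReal) * ∏ i, (1 + b i) ^ N i ω)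
      = (exp (-∑ i, a i * (μ (A i)).toReal) * exp (-∑ i, b i * (μ (A i)).toReal))
        * ∏ i, c i ^ N i ω := by
    intro ω
    rw [mul_mul_mul_comm, ← Finset.prod_mul_distrib]
    simp_rw [hcdef, mul_pow]
  simp_rw [hint]
  rw [integral_const_mul, key]
  simp_rw [hlam]
  rw [← Real.exp_sum, ← Real.exp_add, ← Real.exp_add]
  congr 1
  simp only [← Finset.sum_neg_distrib, ← Finset.sum_add_distrib]
  exact Finset.sum_congr rfl fun i _ => by simp only [hcdef]; ring
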